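/- Let A be an n-by-n partial isometry (A A* A = A) with rank A = n - 1. If A is nilpotent, then A is unitarily similar to the n-by-n nilpotent Jordan block with eigenvalue 0. -/

import Mathlib

open Matrix Polynomial

/-- The n-by-n nilpotent Jordan block: ones on the superdiagonal, zeros elsewhere. -/
def jordanBlock (n : ℕ) : Matrix (Fin n) (Fin n) ℂ :=
  Matrix.of fun i j => if (i : ℕ) + 1 = (j : ℕ) then 1 else 0

/-- Sylvester-type rank inequality. -/
private lemma aux_rank_mul_ge (n : ℕ) (A B : Matrix (Fin n) (Fin n) ℂ) :
    B.rank ≤ (A * B).rank + Module.finrank ℂ (LinearMap.ker A.mulVecLin) := by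
  classical
  set f := A.mulVecLin with hf
  set g := B.mulVecLin with hg
  set p := LinearMap.range g with hp
  have h1 : LinearMap.range (f.domRestrict p) = p.map f := LinearMap.range_domRestrict p f
  have h2 : p.map f = LinearMap.range ((A * B).mulVecLin) := by
    rw [Matrix.mulVecLin_mul, LinearMap.range_comp]
  have h3 := LinearMap.finrank_range_add_finrank_ker (f.domRestrict p)
  have h4 : Module.finrank ℂ (LinearMap.ker (f.domRestrict p))
      ≤ Module.finrank ℂ (LinearMap.ker f) := by
    have hle : (LinearMap.ker (f.domRestrict p)).map p.subtype ≤ LinearMap.ker f := by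
      rintro x ⟨y, hy, rfl⟩
      simpa [LinearMap.mem_ker, LinearMap.domRestrict_apply] using hy
    calc Module.finrank ℂ (LinearMap.ker (f.domRestrict p))
        = Module.finrank ℂ ((LinearMap.ker (f.domRestrict p)).map p.subtype) :=
          (Submodule.finrank_map_subtype_eq p _).symm
      _ ≤ Module.finrank ℂ (LinearMap.ker f) := Submodule.finrank_mono hle
  have hB : B.rank = Module.finrank ℂ p := rfl
  have hAB : (A * B).rank = Module.finrank ℂ (LinearMap.range (f.domRestrict p)) := by
    rw [h1, h2]; rfl
  omega

theorem nilpotent_corank_one_partial_isometry_is_jordan (n : ℕ)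
    (A : Matrix (Fin n) (Fin n) ℂ)
    (hA : A * Aᴴ * A = A) (hr : A.rank = n - 1) (hnil : IsNilpotent A) :
    ∃ U : Matrix.unitaryGroup (Fin n) ℂ,
      A = (U : Matrix (Fin n) (Fin n) ℂ) * jordanBlock n * (U : Matrix (Fin n) (Fin n) ℂ)ᴴ := by
  classical
  obtain _ | m := n
  · exact ⟨1, by ext i j; exact i.elim0⟩
  -- notation: n = m + 1
  -- Step 1: A ^ (m+1) = 0
  have hpow : A ^ (m + 1) = 0 := by
    have h1 : IsNilpotent (A.charpoly - X ^ (m + 1)) := by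
      simpa [Fintype.card_fin] using Matrix.isNilpotent_charpoly_sub_pow_of_isNilpotent hnil
    have h2 : A.charpoly = X ^ (m + 1) := by
      have := h1.eq_zero
      linear_combination (norm := ring_nf) this
    have h3 := Matrix.aeval_self_charpoly A
    rw [h2] at h3
    simpa using h3
  -- Step 2: kernel has dimension 1 and equals range of A ^ m
  have hrm : A.rank = m := by simpa using hr
  have hrn : A.rank + Module.finrank ℂ (LinearMap.ker A.mulVecLin) = m + 1 := by
    have h := LinearMap.finrank_range_add_finrank_ker A.mulVecLin
    simpa [Matrix.rank] using h
  have hker1 : Module.finrank ℂ (LinearMap.ker A.mulVecLin) = 1 := by omega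
  have hrk : ∀ k, m + 1 ≤ (A ^ k).rank + k := by
    intro k
    induction k with
    | zero => simp [Matrix.rank_one]
    | succ k ih =>
      have h := aux_rank_mul_ge (m + 1) A (A ^ k)
      rw [← pow_succ'] at h
      omega
  have hgeq : 1 ≤ (A ^ m).rank := by have := hrk m; omega
  have hle : LinearMap.range ((A ^ m).mulVecLin) ≤ LinearMap.ker A.mulVecLin := by
    rintro x ⟨y, rfl⟩
    simp only [LinearMap.mem_ker, Matrix.mulVecLin_apply, Matrix.mulVec_mulVec]
    rw [← pow_succ', hpow]
    simp
  have heq : LinearMap.range ((A ^ m).mulVecLin) = LinearMap.ker A.mulVecLin := by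
    apply Submodule.eq_of_le_of_finrank_le hle
    rw [hker1]; exact hgeq
  -- Step 3: pick a unit kernel vector
  obtain ⟨v, hvmem, hvne⟩ : ∃ v ∈ LinearMap.ker A.mulVecLin, v ≠ 0 := by
    by_contra h
    push_neg at h
    have : LinearMap.ker A.mulVecLin = ⊥ :=
      (Submodule.eq_bot_iff _).mpr (fun x hx => h x hx)
    rw [this] at hker1
    simp at hker1
  have hvker : A *ᵥ v = 0 := hvmem
  have hvrange : v ∈ LinearMap.range ((A ^ m).mulVecLin) := by rw [heq]; exact hvmem
  obtain ⟨w, hw0⟩ := hvrange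
  have hw : (A ^ m) *ᵥ w = v := hw0
  -- normalization
  set r : ℝ := ∑ i, Complex.normSq (v i) with hrdef
  have hrpos : 0 < r := by
    obtain ⟨i, hi⟩ : ∃ i, v i ≠ 0 := by
      by_contra h; push_neg at h; exact hvne (funext h)
    exact Finset.sum_pos' (fun i _ => Complex.normSq_nonneg _)
      ⟨i, Finset.mem_univ i, Complex.normSq_pos.mpr hi⟩
  have hc : star v ⬝ᵥ v = (r : ℂ) := by
    rw [hrdef]
    push_cast
    simp [dotProduct, Complex.normSq_eq_conj_mul_self]
  set a : ℝ := (Real.sqrt r)⁻¹ with hadef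
  set u0 : Fin (m + 1) → ℂ := (a : ℂ) • v with hu0def
  have hu0norm : star u0 ⬝ᵥ u0 = 1 := by
    have hs : Real.sqrt r * Real.sqrt r = r := Real.mul_self_sqrt hrpos.le
    have hsne : Real.sqrt r ≠ 0 := by positivity
    have hval : a * (a * r) = 1 := by
      rw [hadef]
      field_simp
      rw [sq, hs]
    have h1 : star u0 ⬝ᵥ u0 = ((a * (a * r) : ℝ) : ℂ) := by
      rw [hu0def, star_smul, smul_dotProduct, dotProduct_smul, hc]
      simp only [Complex.star_def, Complex.conj_ofReal, smul_eq_mul]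
      push_cast
      ring
    rw [h1, hval]
    norm_num
  have hAu0 : A *ᵥ u0 = 0 := by
    rw [hu0def, Matrix.mulVec_smul, hvker, smul_zero]
  -- Step 4: the orthonormal chain
  set u : ℕ → Fin (m + 1) → ℂ := fun k => Nat.rec u0 (fun _ w => Aᴴ *ᵥ w) k with hudef
  have husucc : ∀ k, u (k + 1) = Aᴴ *ᵥ u k := fun k => rfl
  have huzero : u 0 = u0 := rfl
  -- membership in ranges of powers
  have hmemP : ∀ k, k ≤ m → ∃ x, (A ^ (m - k)) *ᵥ x = u k := by
    intro k
    induction k with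
    | zero =>
      intro _
      refine ⟨(a : ℂ) • w, ?_⟩
      rw [Matrix.mulVec_smul, Nat.sub_zero, hw, huzero, hu0def]
    | succ k ih =>
      intro hk
      obtain ⟨x, hx⟩ := ih (by omega)
      have hsplit : A ^ (m - k) = A * A ^ (m - (k + 1)) := by
        rw [← pow_succ']
        congr 1
        omega
      set y : Fin (m + 1) → ℂ := (A ^ (m - (k + 1))) *ᵥ x with hydef
      have hAy : A *ᵥ y = u k := by
        rw [hydef, Matrix.mulVec_mulVec, ← hsplit, hx]
      set z : Fin (m + 1) → ℂ := Aᴴ *ᵥ (A *ᵥ y) - y with hzdef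
      have hz : A *ᵥ z = 0 := by
        rw [hzdef, Matrix.mulVec_sub, Matrix.mulVec_mulVec, Matrix.mulVec_mulVec, hA, sub_self]
      have hzmem : z ∈ LinearMap.range ((A ^ m).mulVecLin) := heq.symm ▸ hz
      obtain ⟨w', hw'⟩ := hzmem
      have hmsplit : (A ^ m) = A ^ (m - (k + 1)) * A ^ (k + 1) := by
        rw [← pow_add]
        congr 1
        omega
      refine ⟨x + (A ^ (k + 1)) *ᵥ w', ?_⟩
      have hw'' : (A ^ m) *ᵥ w' = z := hw'
      have hthis : u (k + 1) = y + z := by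
        rw [husucc, ← hAy, hzdef]
        abel
      rw [hthis, Matrix.mulVec_add, Matrix.mulVec_mulVec, ← hmsplit, hw'', ← hydef]
  have hmem : ∀ k, k < m → ∃ x, A *ᵥ x = u k := by
    intro k hk
    obtain ⟨x, hx⟩ := hmemP k (le_of_lt hk)
    have hsplit : A ^ (m - k) = A * A ^ (m - k - 1) := by
      rw [← pow_succ']
      congr 1
      omega
    exact ⟨(A ^ (m - k - 1)) *ᵥ x, by rw [Matrix.mulVec_mulVec, ← hsplit, hx]⟩
  have hproj : ∀ k, k < m → A *ᵥ u (k + 1) = u k := by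
    intro k hk
    obtain ⟨x, hx⟩ := hmem k hk
    rw [husucc, ← hx, Matrix.mulVec_mulVec, Matrix.mulVec_mulVec, hA]
  -- adjoint identities for dot products
  have L1 : ∀ x y : Fin (m + 1) → ℂ, star (Aᴴ *ᵥ x) ⬝ᵥ y = star x ⬝ᵥ (A *ᵥ y) := by
    intro x y
    rw [Matrix.star_mulVec, Matrix.conjTranspose_conjTranspose, Matrix.dotProduct_mulVec]
  have L2 : ∀ x y : Fin (m + 1) → ℂ, star x ⬝ᵥ (Aᴴ *ᵥ y) = star (A *ᵥ x) ⬝ᵥ y := by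
    intro x y
    rw [Matrix.dotProduct_mulVec, ← Matrix.star_mulVec]
  -- orthonormality
  have horth0 : ∀ j, star (u 0) ⬝ᵥ u j = if 0 = j then 1 else 0 := by
    intro j
    cases j with
    | zero => simpa [huzero] using hu0norm
    | succ l =>
      rw [husucc, L2, huzero, hAu0]
      simp
  have horth : ∀ i j, i ≤ m → j ≤ m → star (u i) ⬝ᵥ u j = if i = j then 1 else 0 := by
    intro i
    induction i with
    | zero => intro j _ _; exact horth0 j
    | succ k ih =>
      intro j hk hj
      cases j with
      | zero =>
        rw [Matrix.star_dotProduct, horth0 (k + 1)]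
        simp
      | succ l =>
        rw [husucc, husucc, L1, hproj l (by omega), ih l (by omega) (by omega)]
        simp [Nat.succ_inj]
  -- Step 5: assemble the unitary
  set U : Matrix (Fin (m + 1)) (Fin (m + 1)) ℂ := Matrix.of fun i j => u j i with hUdef
  have hU : Uᴴ * U = 1 := by
    ext i j
    rw [Matrix.mul_apply, Matrix.one_apply]
    have h := horth i j (by omega) (by omega)
    rw [dotProduct] at h
    simp only [hUdef, Matrix.conjTranspose_apply, Matrix.of_apply, Pi.star_apply] at *
    rw [show (∑ k, star (u (↑i) k) * u (↑j) k) = (if (i : ℕ) = (j : ℕ) then 1 else 0) from h]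
    simp [Fin.val_inj]
  have hUU : U * Uᴴ = 1 := mul_eq_one_comm.mp hU
  have hAU : A * U = U * jordanBlock (m + 1) := by
    ext i j
    rw [Matrix.mul_apply, Matrix.mul_apply]
    rcases j with ⟨jv, hjv⟩
    cases jv with
    | zero =>
      have hL : (∑ k, A i k * U k ⟨0, hjv⟩) = (A *ᵥ u 0) i := by
        simp [Matrix.mulVec, dotProduct, hUdef]
      rw [hL, huzero, hAu0]
      simp [jordanBlock]
    | succ l =>
      have hlm : l < m := by omega
      have hL : (∑ k, A i k * U k ⟨l + 1, hjv⟩) = (A *ᵥ u (l + 1)) i := by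
        simp [Matrix.mulVec, dotProduct, hUdef]
      rw [hL, hproj l hlm]
      rw [Finset.sum_eq_single (⟨l, by omega⟩ : Fin (m + 1))]
      · simp [hUdef, jordanBlock]
      · intro k _ hkne
        have hne : ¬((k : ℕ) + 1 = l + 1) := fun h => hkne (Fin.val_injective (by simpa using h))
        simp [jordanBlock, hne]
        intro h; exact (hne (by omega)).elim
      · intro h
        exact absurd (Finset.mem_univ _) h
  refine ⟨⟨U, Matrix.mem_unitaryGroup_iff'.mpr (by rw [Matrix.star_eq_conjTranspose]; exact hU)⟩, ?_⟩
  calc A = A * (U * Uᴴ) := by rw [hUU, mul_one]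
    _ = (A * U) * Uᴴ := by rw [Matrix.mul_assoc]
    _ = U * jordanBlock (m + 1) * Uᴴ := by rw [hAU]
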